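/- (Theorem 2 of the paper, finite-time tracking bound.) Let Y = ∏_{i=1}^d [l_i, u_i] ⊂ ℝ^d be a nonempty box and let (F^k)_{k≥0} be a sequence of differentiable functions ℝ^d → ℝ such that each F^k has a coordinate-wise quadratic upper bound with constant L > 0 on Y, satisfies the proximal Polyak–Łojasiewicz inequality on Y with constant σ ∈ (0, dL), attains a common optimal value F* := inf_{ξ∈Y} F^k(ξ) independent of k, and sup_{ξ ∈ Y} |F^k(ξ) − F^{k−1}(ξ)| ≤ e for all k ≥ 1 and some e ≥ 0. Fix ξ^0 ∈ Y and, for every finite coordinate sequence ω = (i^0,…,i^{k−1}) ∈ {1,…,d}^k, define ξ^{j+1}(ω) as the coordinate prox-step of F^j at ξ^j(ω) in coordinate i^j with step constant L (one iteration per time step). Then, with q := 1 − σ/(dL), for every k ≥ 0: d^{−k} Σ_{ω ∈ {1,…,d}^k} [ F^k(ξ^k(ω)) − F* ] ≤ q^k (F^0(ξ^0) − F*) + e · Σ_{j=0}^{k−1} q^j ≤ q^k (F^0(ξ^0) − F*) + e/(1 − q). -/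

import Mathlib

/-- Membership in the box `Y = ∏_i [l_i, u_i] ⊂ ℝ^d`. -/
def InBox {d : ℕ} (l u ξ : Fin d → ℝ) : Prop := ∀ i, ξ i ∈ Set.Icc (l i) (u i)

/-- The `i`-th partial derivative `∂_i F` of `F : ℝ^d → ℝ` at `ξ`. -/
noncomputable def pd {d : ℕ} (F : (Fin d → ℝ) → ℝ) (ξ : Fin d → ℝ) (i : Fin d) : ℝ :=
  deriv (fun t : ℝ => F (Function.update ξ i t)) (ξ i)

/-- `F` has a coordinate-wise quadratic upper bound with constant `L` on the box:
`F(ξ + α e_i) ≤ F(ξ) + α ∂_i F(ξ) + (L/2) α²` whenever `ξ` and `ξ + α e_i` lie in the box. -/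
def CoordQuadUB {d : ℕ} (F : (Fin d → ℝ) → ℝ) (L : ℝ) (l u : Fin d → ℝ) : Prop :=
  ∀ ξ, InBox l u ξ → ∀ i : Fin d, ∀ α : ℝ, InBox l u (Function.update ξ i (ξ i + α)) →
    F (Function.update ξ i (ξ i + α)) ≤ F ξ + α * pd F ξ i + L / 2 * α ^ 2

/-- `ξ'` is the coordinate prox-step of `F` at `ξ` in coordinate `i` with step constant `L`:
`ξ' = ξ + α e_i` where `α` minimizes `α ∂_i F(ξ) + (L/2) α²` subject to `ξ_i + α ∈ [l_i, u_i]`. -/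
def IsProxStep {d : ℕ} (F : (Fin d → ℝ) → ℝ) (L : ℝ) (l u ξ : Fin d → ℝ) (i : Fin d)
    (ξ' : Fin d → ℝ) : Prop :=
  ∃ α : ℝ, ξ' = Function.update ξ i (ξ i + α) ∧ ξ i + α ∈ Set.Icc (l i) (u i) ∧
    ∀ β : ℝ, ξ i + β ∈ Set.Icc (l i) (u i) →
      α * pd F ξ i + L / 2 * α ^ 2 ≤ β * pd F ξ i + L / 2 * β ^ 2

/-- The forward-step quantity
`D(ξ, α) = −2α · inf_{ξ' ∈ Y} [⟨∇F(ξ), ξ' − ξ⟩ + (α/2)‖ξ' − ξ‖²]`. -/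
noncomputable def Dfwd {d : ℕ} (F : (Fin d → ℝ) → ℝ) (l u ξ : Fin d → ℝ) (α : ℝ) : ℝ :=
  -2 * α * sInf {v : ℝ | ∃ ξ', InBox l u ξ' ∧
    v = (∑ i, pd F ξ i * (ξ' i - ξ i)) + α / 2 * ∑ i, (ξ' i - ξ i) ^ 2}

/-- The proximal Polyak–Łojasiewicz inequality on the box with constant `σ` and optimal
value `Fstar`: `(1/2) D(ξ, L) ≥ σ (F(ξ) − F*)` for all `ξ` in the box. -/
def ProxPL {d : ℕ} (F : (Fin d → ℝ) → ℝ) (L : ℝ) (l u : Fin d → ℝ) (σ Fstar : ℝ) : Prop :=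
  ∀ ξ, InBox l u ξ → (1 / 2) * Dfwd F l u ξ L ≥ σ * (F ξ - Fstar)

lemma box_update {d : ℕ} {l u ξ : Fin d → ℝ} (hξ : InBox l u ξ) {i : Fin d} {t : ℝ}
    (ht : t ∈ Set.Icc (l i) (u i)) : InBox l u (Function.update ξ i t) := by
  intro j
  rcases eq_or_ne j i with rfl | hji
  · simpa using ht
  · simpa [Function.update_of_ne hji] using hξ j

lemma key_descent {d : ℕ} {l u : Fin d → ℝ} {F : (Fin d → ℝ) → ℝ} {L σ Fstar : ℝ}
    (hL : 0 < L) (hquad : CoordQuadUB F L l u)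
    (hPL : ∀ ξ, InBox l u ξ → (1 / 2) * Dfwd F l u ξ L ≥ σ * (F ξ - Fstar))
    {ξ : Fin d → ℝ} (hξ : InBox l u ξ) {P : Fin d → (Fin d → ℝ)}
    (hP : ∀ i, IsProxStep F L l u ξ i (P i)) :
    L * ∑ i, (F (P i) - Fstar) ≤ ((d : ℝ) * L - σ) * (F ξ - Fstar) := by
  choose α hPα hαmem hαmin using hP
  set S : Set ℝ := {v : ℝ | ∃ ξ', InBox l u ξ' ∧
    v = (∑ i, pd F ξ i * (ξ' i - ξ i)) + L / 2 * ∑ i, (ξ' i - ξ i) ^ 2} with hS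
  set M : ℝ := ∑ i, (α i * pd F ξ i + L / 2 * (α i) ^ 2) with hM
  have hSne : S.Nonempty := ⟨_, ξ, hξ, rfl⟩
  have hm : M ≤ sInf S := by
    apply le_csInf hSne
    rintro v ⟨ξ', hξ', rfl⟩
    rw [Finset.mul_sum, ← Finset.sum_add_distrib]
    apply Finset.sum_le_sum
    intro i _
    have h := hαmin i (ξ' i - ξ i) (by simpa using hξ' i)
    calc α i * pd F ξ i + L / 2 * (α i) ^ 2
        ≤ (ξ' i - ξ i) * pd F ξ i + L / 2 * (ξ' i - ξ i) ^ 2 := h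
      _ = pd F ξ i * (ξ' i - ξ i) + L / 2 * (ξ' i - ξ i) ^ 2 := by ring
  have hD : (1 / 2) * (-2 * L * sInf S) ≥ σ * (F ξ - Fstar) := hPL ξ hξ
  have hD' : L * sInf S ≤ -(σ * (F ξ - Fstar)) := by linarith
  have hsum : ∑ i, F (P i) ≤ (d : ℝ) * F ξ + M := by
    have : ∑ i, F (P i) ≤ ∑ i : Fin d, (F ξ + (α i * pd F ξ i + L / 2 * (α i) ^ 2)) := by
      apply Finset.sum_le_sum
      intro i _
      have hb : InBox l u (Function.update ξ i (ξ i + α i)) := box_update hξ (hαmem i)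
      have := hquad ξ hξ i (α i) hb
      rw [hPα i]
      linarith
    rw [Finset.sum_add_distrib, Finset.sum_const, Finset.card_univ, Fintype.card_fin,
      nsmul_eq_mul] at this
    rw [hM]
    linarith
  have hsub : ∑ i, (F (P i) - Fstar) = (∑ i, F (P i)) - (d : ℝ) * Fstar := by
    rw [Finset.sum_sub_distrib, Finset.sum_const, Finset.card_univ, Fintype.card_fin,
      nsmul_eq_mul]
  rw [hsub]
  have h1 : L * (∑ i, F (P i)) ≤ L * ((d : ℝ) * F ξ + M) :=
    mul_le_mul_of_nonneg_left hsum hL.le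
  have h2 : L * M ≤ L * sInf S := mul_le_mul_of_nonneg_left hm hL.le
  nlinarith [h1, h2, hD']

/-- Theorem 2 of the paper, finite-time tracking bound: for a sequence of
objectives `F^k` with common constants `L`, `σ ∈ (0, dL)`, common attained optimal value
`F*`, and successive variation bounded by `e`, one randomized coordinate prox-step per
time step yields, with `q := 1 − σ/(dL)`,
`d^{−k} Σ_ω [F^k(ξ^k(ω)) − F*] ≤ q^k (F⁰(ξ⁰) − F*) + e Σ_{j<k} q^j ≤ q^k (F⁰(ξ⁰) − F*) + e/(1 − q)`. -/
theorem stmt8 {d : ℕ} (hd : 0 < d) (l u : Fin d → ℝ) (hlu : ∀ i, l i ≤ u i)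
    (Fk : ℕ → (Fin d → ℝ) → ℝ) (hdiff : ∀ k, Differentiable ℝ (Fk k))
    (L σ Fstar e : ℝ) (hL : 0 < L) (hσ : 0 < σ) (hσ' : σ < d * L) (he : 0 ≤ e)
    (hquad : ∀ k, CoordQuadUB (Fk k) L l u)
    (hstar : ∀ k, Fstar = sInf {v : ℝ | ∃ ξ, InBox l u ξ ∧ v = Fk k ξ})
    (hatt : ∀ k, ∃ ξs, InBox l u ξs ∧ Fk k ξs = Fstar)
    (hPL : ∀ k, ProxPL (Fk k) L l u σ Fstar)
    (hvar : ∀ k : ℕ, 1 ≤ k → ∀ ξ, InBox l u ξ → |Fk k ξ - Fk (k - 1) ξ| ≤ e)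
    (ξ0 : Fin d → ℝ) (hξ0 : InBox l u ξ0)
    (Ξ : (k : ℕ) → (Fin k → Fin d) → (Fin d → ℝ))
    (hinit : ∀ ω : Fin 0 → Fin d, Ξ 0 ω = ξ0)
    (hstep : ∀ k : ℕ, ∀ ω : Fin (k + 1) → Fin d,
      IsProxStep (Fk k) L l u (Ξ k (fun j => ω j.castSucc)) (ω (Fin.last k)) (Ξ (k + 1) ω))
    (q : ℝ) (hq : q = 1 - σ / (d * L)) :
    ∀ k : ℕ,
      (1 / (d : ℝ) ^ k) * ∑ ω : Fin k → Fin d, (Fk k (Ξ k ω) - Fstar) ≤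
          q ^ k * (Fk 0 ξ0 - Fstar) + e * ∑ j ∈ Finset.range k, q ^ j ∧
      q ^ k * (Fk 0 ξ0 - Fstar) + e * ∑ j ∈ Finset.range k, q ^ j ≤
          q ^ k * (Fk 0 ξ0 - Fstar) + e / (1 - q) := by
  have hdR : (0 : ℝ) < (d : ℝ) := by exact_mod_cast hd
  have hdL : (0 : ℝ) < (d : ℝ) * L := by positivity
  have hq0 : 0 ≤ q := by
    rw [hq, sub_nonneg, div_le_one hdL]
    exact hσ'.le
  have h1q : 0 < 1 - q := by
    rw [hq]
    have : 0 < σ / ((d : ℝ) * L) := div_pos hσ hdL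
    linarith
  have hdq : L * ((d : ℝ) * q) = (d : ℝ) * L - σ := by
    rw [hq]
    field_simp
  -- strengthened induction
  have main : ∀ k : ℕ, (∀ ω : Fin k → Fin d, InBox l u (Ξ k ω)) ∧
      (∑ ω : Fin k → Fin d, (Fk k (Ξ k ω) - Fstar)) ≤
        (d : ℝ) ^ k * (q ^ k * (Fk 0 ξ0 - Fstar) + e * ∑ j ∈ Finset.range k, q ^ j) := by
    intro k
    induction k with
    | zero =>
      constructor
      · intro ω; rw [hinit ω]; exact hξ0
      · have hc : ∀ ω : Fin 0 → Fin d, Fk 0 (Ξ 0 ω) - Fstar = Fk 0 ξ0 - Fstar :=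
          fun ω => by rw [hinit ω]
        rw [Finset.sum_congr rfl (fun ω _ => hc ω), Finset.sum_const, Finset.card_univ]
        simp
    | succ k ih =>
      obtain ⟨hbox, hbound⟩ := ih
      have hbox' : ∀ ω : Fin (k + 1) → Fin d, InBox l u (Ξ (k + 1) ω) := by
        intro ω
        obtain ⟨a, ha, hmem, -⟩ := hstep k ω
        rw [ha]
        exact box_update (hbox _) hmem
      refine ⟨hbox', ?_⟩
      -- per-point variation bound
      have hv : ∀ ω : Fin (k + 1) → Fin d,
          Fk (k + 1) (Ξ (k + 1) ω) - Fstar ≤ (Fk k (Ξ (k + 1) ω) - Fstar) + e := by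
        intro ω
        have := hvar (k + 1) (by omega) (Ξ (k + 1) ω) (hbox' ω)
        simp only [Nat.add_sub_cancel] at this
        have := abs_le.mp this
        linarith [this.2]
      -- reindex via snoc
      have hsnoc : ∀ ω' : Fin k → Fin d,
          ∑ i : Fin d, (Fk k (Ξ (k + 1) (Fin.snoc ω' i)) - Fstar) ≤
            ((d : ℝ) * q) * (Fk k (Ξ k ω') - Fstar) := by
        intro ω'
        have hP : ∀ i : Fin d, IsProxStep (Fk k) L l u (Ξ k ω') i
            (Ξ (k + 1) (Fin.snoc ω' i)) := by
          intro i
          have h := hstep k (Fin.snoc ω' i)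
          have e1 : (fun j : Fin k => (Fin.snoc ω' i : Fin (k+1) → Fin d) j.castSucc) = ω' := by
            funext j; simp
          have e2 : (Fin.snoc ω' i : Fin (k+1) → Fin d) (Fin.last k) = i := by simp
          rwa [e1, e2] at h
        have hk := key_descent hL (hquad k) (hPL k) (hbox ω') hP
        have heq : L * ((d : ℝ) * q * (Fk k (Ξ k ω') - Fstar)) =
            ((d : ℝ) * L - σ) * (Fk k (Ξ k ω') - Fstar) := by rw [← mul_assoc, hdq]
        exact le_of_mul_le_mul_left (by linarith) hL
      calc ∑ ω : Fin (k + 1) → Fin d, (Fk (k + 1) (Ξ (k + 1) ω) - Fstar)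
          ≤ ∑ ω : Fin (k + 1) → Fin d, ((Fk k (Ξ (k + 1) ω) - Fstar) + e) :=
            Finset.sum_le_sum fun ω _ => hv ω
        _ = (∑ ω : Fin (k + 1) → Fin d, (Fk k (Ξ (k + 1) ω) - Fstar)) + (d : ℝ) ^ (k + 1) * e := by
            rw [Finset.sum_add_distrib, Finset.sum_const, Finset.card_univ]
            simp [Fintype.card_fun, mul_comm]
        _ = (∑ ω' : Fin k → Fin d, ∑ i : Fin d, (Fk k (Ξ (k + 1) (Fin.snoc ω' i)) - Fstar))
              + (d : ℝ) ^ (k + 1) * e := by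
            congr 1
            rw [← (Fin.snocEquiv (fun _ => Fin d)).sum_comp
              (fun ω => Fk k (Ξ (k + 1) ω) - Fstar)]
            rw [Fintype.sum_prod_type]
            rw [Finset.sum_comm]
            rfl
        _ ≤ (∑ ω' : Fin k → Fin d, ((d : ℝ) * q) * (Fk k (Ξ k ω') - Fstar))
              + (d : ℝ) ^ (k + 1) * e := by
            exact add_le_add (Finset.sum_le_sum fun ω' _ => hsnoc ω') le_rfl
        _ = ((d : ℝ) * q) * (∑ ω' : Fin k → Fin d, (Fk k (Ξ k ω') - Fstar))
              + (d : ℝ) ^ (k + 1) * e := by rw [Finset.mul_sum]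
        _ ≤ ((d : ℝ) * q) * ((d : ℝ) ^ k * (q ^ k * (Fk 0 ξ0 - Fstar) +
              e * ∑ j ∈ Finset.range k, q ^ j)) + (d : ℝ) ^ (k + 1) * e := by
            have hdq0 : 0 ≤ (d : ℝ) * q := by positivity
            exact add_le_add (mul_le_mul_of_nonneg_left hbound hdq0) le_rfl
        _ = (d : ℝ) ^ (k + 1) * (q ^ (k + 1) * (Fk 0 ξ0 - Fstar) +
              e * ∑ j ∈ Finset.range (k + 1), q ^ j) := by
            rw [geom_sum_succ]
            ring
  intro k
  obtain ⟨-, hbound⟩ := main k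
  have hdk : (0 : ℝ) < (d : ℝ) ^ k := by positivity
  constructor
  · rw [div_mul_eq_mul_div, div_le_iff₀ hdk, mul_comm _ ((d : ℝ) ^ k)]
    simpa [one_mul] using hbound
  · have hgeo : ∑ j ∈ Finset.range k, q ^ j ≤ 1 / (1 - q) := by
      have hqne : q ≠ 1 := by linarith
      have hqk : 0 ≤ q ^ k := pow_nonneg hq0 k
      have heq : (q ^ k - 1) / (q - 1) = (1 - q ^ k) / (1 - q) := by
        rw [div_eq_div_iff (by linarith) (by linarith)]
        ring
      rw [geom_sum_eq hqne, heq]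
      exact (div_le_div_iff_of_pos_right h1q).mpr (by linarith)
    have := mul_le_mul_of_nonneg_left hgeo he
    rw [mul_one_div] at this
    linarith
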